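/- Hoeffding's randomized permutation test is exact: if one rejects when T(X) > T^(k)(X) and rejects with probability a(X) = (α·#G − M⁺(X))/M⁰(X) when T(X) = T^(k)(X), where M⁺(X) = #{g ∈ G : T(gX) > T^(k)(X)} and M⁰(X) = #{g ∈ G : T(gX) = T^(k)(X)}, then the total rejection probability under H₀ is exactly α. -/

import Mathlib

open MeasureTheory Finset
open scoped ENNReal

set_option linter.unusedSectionVars false

/-- The `k`-th smallest element (1-based) of a multiset of reals. -/
noncomputable def sortedVal (s : Multiset ℝ) (k : ℕ) : ℝ :=
  (s.sort (· ≤ ·)).getD (k - 1) 0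

section SortedLemmas
open List

lemma sorted_countP_le_getElem {l : List ℝ} (hl : l.Pairwise (· ≤ ·)) {i : ℕ} (hi : i < l.length)
    {c : ℝ} (hc : l[i] = c) :
    i + 1 ≤ l.countP (fun a => decide (a ≤ c)) := by
  conv_rhs => rw [← take_append_drop (i+1) l, countP_append]
  have hlen : (take (i+1) l).length = i + 1 := by
    rw [length_take]; omega
  have h1 : countP (fun a => decide (a ≤ c)) (take (i+1) l) = i + 1 := by
    rw [countP_eq_length.2, hlen]
    intro a ha
    obtain ⟨j, hj, rfl⟩ := getElem_of_mem ha
    rw [getElem_take]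
    simp only [decide_eq_true_iff]
    have hj' : j < l.length := by rw [length_take] at hj; omega
    have := hl.rel_get_of_le (a := ⟨j, hj'⟩) (b := ⟨i, hi⟩)
      (by simp only [Fin.le_def]; rw [hlen] at hj; omega)
    rw [← hc]
    simpa using this
  omega

lemma sorted_countP_lt_getElem {l : List ℝ} (hl : l.Pairwise (· ≤ ·)) {i : ℕ} (hi : i < l.length)
    {c : ℝ} (hc : l[i] = c) :
    l.countP (fun a => decide (a < c)) ≤ i := by
  conv_lhs => rw [← take_append_drop i l, countP_append]
  have h2 : countP (fun a => decide (a < c)) (drop i l) = 0 := by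
    rw [countP_eq_zero]
    intro a ha
    obtain ⟨j, hj, rfl⟩ := getElem_of_mem ha
    rw [getElem_drop]
    simp only [decide_eq_true_iff, not_lt, ← hc]
    have hj' : i + j < l.length := by rw [length_drop] at hj; omega
    have := hl.rel_get_of_le (a := ⟨i, hi⟩) (b := ⟨i + j, hj'⟩) (by simp [Fin.le_def])
    simpa using this
  have h3 := countP_le_length (p := fun a => decide (a < c)) (l := take i l)
  rw [length_take] at h3
  omega

section sortedValLemmas
variable {s : Multiset ℝ} {k : ℕ}

lemma sortedVal_mem (hk : 1 ≤ k) (hks : k ≤ Multiset.card s) : sortedVal s k ∈ s := by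
  have hi : k - 1 < (s.sort (· ≤ ·)).length := by rw [Multiset.length_sort]; omega
  have hval : sortedVal s k = (s.sort (· ≤ ·))[k-1] := List.getD_eq_getElem _ _ hi
  rw [hval, ← Multiset.mem_sort (· ≤ ·)]
  exact List.getElem_mem hi

lemma le_countP_le_sortedVal (hk : 1 ≤ k) (hks : k ≤ Multiset.card s)
    {c : ℝ} (hc : sortedVal s k = c) :
    k ≤ Multiset.countP (fun a => a ≤ c) s := by
  have hi : k - 1 < (s.sort (· ≤ ·)).length := by rw [Multiset.length_sort]; omega
  have hval : (s.sort (· ≤ ·))[k-1] = c := by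
    rw [← hc]; exact (List.getD_eq_getElem _ _ hi).symm
  conv_rhs => rw [← Multiset.sort_eq s (· ≤ ·), Multiset.coe_countP]
  have := sorted_countP_le_getElem (Multiset.pairwise_sort s (· ≤ ·)) hi hval
  omega

lemma countP_lt_sortedVal_le (hk : 1 ≤ k) (hks : k ≤ Multiset.card s)
    {c : ℝ} (hc : sortedVal s k = c) :
    Multiset.countP (fun a => a < c) s ≤ k - 1 := by
  have hi : k - 1 < (s.sort (· ≤ ·)).length := by rw [Multiset.length_sort]; omega
  have hval : (s.sort (· ≤ ·))[k-1] = c := by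
    rw [← hc]; exact (List.getD_eq_getElem _ _ hi).symm
  conv_lhs => rw [← Multiset.sort_eq s (· ≤ ·), Multiset.coe_countP]
  exact sorted_countP_lt_getElem (Multiset.pairwise_sort s (· ≤ ·)) hi hval

lemma countP_mono_pred {p q : ℝ → Prop} [DecidablePred p] [DecidablePred q]
    (h : ∀ a, p a → q a) : Multiset.countP p s ≤ Multiset.countP q s := by
  rw [Multiset.countP_eq_card_filter, Multiset.countP_eq_card_filter]
  exact Multiset.card_le_card (Multiset.monotone_filter_right s h)

lemma sortedVal_le_iff (hk : 1 ≤ k) (hks : k ≤ Multiset.card s) (c : ℝ) :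
    sortedVal s k ≤ c ↔ k ≤ Multiset.countP (fun a => a ≤ c) s := by
  constructor
  · intro h
    refine le_trans (le_countP_le_sortedVal hk hks rfl) (countP_mono_pred ?_)
    exact fun a ha => le_trans ha h
  · intro h
    by_contra hlt
    push_neg at hlt
    have h2 := countP_lt_sortedVal_le (s := s) hk hks rfl
    have h3 : Multiset.countP (fun a => a ≤ c) s ≤
        Multiset.countP (fun a => a < sortedVal s k) s :=
      countP_mono_pred fun a ha => lt_of_le_of_lt ha hlt
    omega

end sortedValLemmas

end SortedLemmas

section Glevel
open List
variable {G : Type*} [Group G] [Fintype G]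

noncomputable def hTk (α : ℝ) (y : G → ℝ) : ℝ :=
  sortedVal (Multiset.map y Finset.univ.val) (Nat.ceil ((1 - α) * (Fintype.card G : ℝ)))

noncomputable def hMp (α : ℝ) (y : G → ℝ) : ℕ :=
  (Finset.univ.filter fun g => y g > hTk α y).card

noncomputable def hMz (α : ℝ) (y : G → ℝ) : ℕ :=
  (Finset.univ.filter fun g => y g = hTk α y).card

noncomputable def ha (α : ℝ) (y : G → ℝ) : ℝ :=
  (α * (Fintype.card G : ℝ) - hMp α y) / hMz α y

noncomputable def hF (α : ℝ) (y : G → ℝ) : ℝ≥0∞ :=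
  (if y 1 > hTk α y then 1 else 0) +
    (if y 1 = hTk α y then ENNReal.ofReal (ha α y) else 0)

lemma countP_map_eq_card_filter (y : G → ℝ) (p : ℝ → Prop) [DecidablePred p] :
    Multiset.countP p (Multiset.map y Finset.univ.val) =
      (Finset.univ.filter fun g => p (y g)).card := by
  rw [Multiset.countP_map]
  rfl

variable {α : ℝ}

lemma hk_one_le (hα : α ∈ Set.Ico (0:ℝ) 1) :
    1 ≤ Nat.ceil ((1 - α) * (Fintype.card G : ℝ)) := by
  rw [Nat.one_le_iff_ne_zero, ← Nat.pos_iff_ne_zero, Nat.ceil_pos]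
  have hN : (0:ℝ) < Fintype.card G := by exact_mod_cast Fintype.card_pos
  nlinarith [hα.1, hα.2]

lemma hk_le_card (hα : α ∈ Set.Ico (0:ℝ) 1) :
    Nat.ceil ((1 - α) * (Fintype.card G : ℝ)) ≤ Fintype.card G := by
  rw [Nat.ceil_le]
  have hN : (0:ℝ) ≤ Fintype.card G := by positivity
  nlinarith [hα.1]

lemma card_map_univ (y : G → ℝ) :
    Multiset.card (Multiset.map y Finset.univ.val) = Fintype.card G := by
  rw [Multiset.card_map]; rfl

lemma hMz_pos (hα : α ∈ Set.Ico (0:ℝ) 1) (y : G → ℝ) : 0 < hMz α y := by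
  have hmem : hTk α y ∈ Multiset.map y Finset.univ.val :=
    sortedVal_mem (hk_one_le hα) (by rw [card_map_univ]; exact hk_le_card hα)
  obtain ⟨g, -, hg⟩ := Multiset.mem_map.1 hmem
  rw [hMz, Finset.card_pos]
  exact ⟨g, Finset.mem_filter.2 ⟨Finset.mem_univ g, hg⟩⟩

lemma hMp_le (hα : α ∈ Set.Ico (0:ℝ) 1) (y : G → ℝ) :
    (hMp α y : ℝ) ≤ α * Fintype.card G := by
  set k := Nat.ceil ((1 - α) * (Fintype.card G : ℝ)) with hkdef
  have h1 : k ≤ (Finset.univ.filter fun g => y g ≤ hTk α y).card := by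
    have h0 := le_countP_le_sortedVal (s := Multiset.map y Finset.univ.val)
      (hk_one_le hα) (by rw [card_map_univ]; exact hk_le_card hα) (c := hTk α y) rfl
    rwa [countP_map_eq_card_filter] at h0
  have h2 : (Finset.univ.filter fun g => y g ≤ hTk α y).card + hMp α y = Fintype.card G := by
    rw [hMp]
    have := Finset.card_filter_add_card_filter_not
      (s := (Finset.univ : Finset G)) (fun g => y g ≤ hTk α y)
    simp only [not_le] at this
    rw [Finset.card_univ] at this
    convert this using 3
  have h3 : (k:ℝ) + hMp α y ≤ Fintype.card G := by
    have := Nat.add_le_add_right h1 (hMp α y)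
    rw [h2] at this
    exact_mod_cast this
  have h4 : (1 - α) * (Fintype.card G : ℝ) ≤ k := Nat.le_ceil _
  nlinarith

lemma hMp_add_hMz_gt (hα : α ∈ Set.Ico (0:ℝ) 1) (y : G → ℝ) :
    α * Fintype.card G < (hMp α y : ℝ) + hMz α y := by
  set k := Nat.ceil ((1 - α) * (Fintype.card G : ℝ)) with hkdef
  have hk1 : 1 ≤ k := hk_one_le hα
  have h1 : (Finset.univ.filter fun g => y g < hTk α y).card ≤ k - 1 := by
    have h0 := countP_lt_sortedVal_le (s := Multiset.map y Finset.univ.val)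
      hk1 (by rw [card_map_univ]; exact hk_le_card hα) (c := hTk α y) rfl
    rwa [countP_map_eq_card_filter] at h0
  have h2 : (Finset.univ.filter fun g => y g < hTk α y).card +
      ((Finset.univ.filter fun g => y g > hTk α y).card +
       (Finset.univ.filter fun g => y g = hTk α y).card) = Fintype.card G := by
    classical
    have hdisj : Disjoint (Finset.univ.filter fun g => y g > hTk α y)
        (Finset.univ.filter fun g => y g = hTk α y) := by
      rw [Finset.disjoint_filter]
      intro g _ hgt heq
      exact absurd heq (ne_of_gt hgt)
    rw [← Finset.card_union_of_disjoint hdisj, ← Finset.filter_or]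
    have := Finset.card_filter_add_card_filter_not
      (s := (Finset.univ : Finset G)) (fun g => y g < hTk α y)
    rw [← Finset.card_univ, ← this]
    congr 2
    apply Finset.filter_congr
    intro g _
    simp [not_lt, le_iff_lt_or_eq, eq_comm]
  have h4 : (k:ℝ) < (1 - α) * (Fintype.card G : ℝ) + 1 := by
    apply Nat.ceil_lt_add_one
    have hN : (0:ℝ) ≤ Fintype.card G := by positivity
    nlinarith [hα.1, hα.2]
  rw [hMp, hMz]
  have hcast : ((Finset.univ.filter fun g => y g < hTk α y).card : ℝ) ≤ (k:ℝ) - 1 := by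
    have : ((Finset.univ.filter fun g => y g < hTk α y).card : ℝ) ≤ ((k - 1 : ℕ) : ℝ) := by
      exact_mod_cast h1
    rw [Nat.cast_sub hk1] at this
    simpa using this
  have h2' : ((Finset.univ.filter fun g => y g < hTk α y).card : ℝ) +
      (((Finset.univ.filter fun g => y g > hTk α y).card : ℝ) +
       ((Finset.univ.filter fun g => y g = hTk α y).card : ℝ)) = Fintype.card G := by
    exact_mod_cast h2
  nlinarith

lemma ha_nonneg (hα : α ∈ Set.Ico (0:ℝ) 1) (y : G → ℝ) : 0 ≤ ha α y := by
  apply div_nonneg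
  · linarith [hMp_le hα y]
  · positivity

lemma ha_le_one (hα : α ∈ Set.Ico (0:ℝ) 1) (y : G → ℝ) : ha α y ≤ 1 := by
  rw [ha, div_le_one (by exact_mod_cast hMz_pos hα y)]
  linarith [hMp_add_hMz_gt hα y]

lemma ha_mul_hMz (hα : α ∈ Set.Ico (0:ℝ) 1) (y : G → ℝ) :
    ha α y * hMz α y = α * Fintype.card G - hMp α y := by
  rw [ha, div_mul_cancel₀]
  exact_mod_cast (hMz_pos hα y).ne'

end Glevel

section shift
variable {G : Type*} [Group G] [Fintype G] {α : ℝ}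

lemma muniv_shift (y : G → ℝ) (g : G) :
    Multiset.map (fun a => y (a * g)) Finset.univ.val = Multiset.map y Finset.univ.val := by
  have h1 : Multiset.map (fun a => y (a * g)) Finset.univ.val
      = Multiset.map y (Multiset.map (fun a => a * g) Finset.univ.val) := by
    rw [Multiset.map_map]; rfl
  rw [h1]
  congr 1
  have h2 := Finset.map_univ_equiv (Equiv.mulRight g)
  have h3 := congrArg Finset.val h2
  rw [Finset.map_val] at h3
  simpa [Equiv.coe_mulRight] using h3

lemma hTk_shift (y : G → ℝ) (g : G) : hTk α (fun a => y (a * g)) = hTk α y := by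
  unfold hTk
  rw [muniv_shift]

lemma hMp_shift (y : G → ℝ) (g : G) : hMp α (fun a => y (a * g)) = hMp α y := by
  have e1 := countP_map_eq_card_filter (G := G) (fun a => y (a * g)) (fun b => hTk α y < b)
  have e2 := countP_map_eq_card_filter (G := G) y (fun b => hTk α y < b)
  rw [muniv_shift] at e1
  unfold hMp
  rw [hTk_shift]
  exact e1.symm.trans e2

lemma hMz_shift (y : G → ℝ) (g : G) : hMz α (fun a => y (a * g)) = hMz α y := by
  have e1 := countP_map_eq_card_filter (G := G) (fun a => y (a * g)) (fun b => b = hTk α y)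
  have e2 := countP_map_eq_card_filter (G := G) y (fun b => b = hTk α y)
  rw [muniv_shift] at e1
  unfold hMz
  rw [hTk_shift]
  exact e1.symm.trans e2

lemma ha_shift (y : G → ℝ) (g : G) : ha α (fun a => y (a * g)) = ha α y := by
  unfold ha
  rw [hMp_shift, hMz_shift]

lemma hF_shift (y : G → ℝ) (g : G) :
    hF α (fun a => y (a * g)) =
      (if y g > hTk α y then 1 else 0) +
        (if y g = hTk α y then ENNReal.ofReal (ha α y) else 0) := by
  unfold hF
  rw [hTk_shift, ha_shift]
  simp only [one_mul]

lemma key_sum (hα : α ∈ Set.Ico (0:ℝ) 1) (y : G → ℝ) :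
    ∑ g : G, hF α (fun a => y (a * g)) =
      ENNReal.ofReal (α * (Fintype.card G : ℝ)) := by
  have hsum : ∑ g : G, hF α (fun a => y (a * g)) =
      (hMp α y : ℝ≥0∞) + (hMz α y : ℝ≥0∞) * ENNReal.ofReal (ha α y) := by
    calc ∑ g : G, hF α (fun a => y (a * g))
        = ∑ g : G, ((if y g > hTk α y then 1 else 0) +
            (if y g = hTk α y then ENNReal.ofReal (ha α y) else 0)) :=
          Finset.sum_congr rfl fun g _ => hF_shift y g
      _ = (∑ g : G, if y g > hTk α y then 1 else 0) +
            ∑ g : G, (if y g = hTk α y then ENNReal.ofReal (ha α y) else 0) :=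
          Finset.sum_add_distrib
      _ = (hMp α y : ℝ≥0∞) + (hMz α y : ℝ≥0∞) * ENNReal.ofReal (ha α y) := by
          rw [Finset.sum_boole, Finset.sum_ite, Finset.sum_const, Finset.sum_const_zero,
            add_zero, nsmul_eq_mul]
          rfl
  rw [hsum]
  have hMz0 : (0:ℝ) ≤ (hMz α y : ℝ) := by positivity
  have hmul : (hMz α y : ℝ≥0∞) * ENNReal.ofReal (ha α y)
      = ENNReal.ofReal (α * (Fintype.card G : ℝ) - hMp α y) := by
    rw [← ENNReal.ofReal_natCast (hMz α y), ← ENNReal.ofReal_mul hMz0]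
    congr 1
    rw [mul_comm]
    exact ha_mul_hMz hα y
  rw [hmul, ← ENNReal.ofReal_natCast (hMp α y), ← ENNReal.ofReal_add (by positivity)
    (by linarith [hMp_le hα y])]
  congr 1
  ring

end shift

section meas
variable {G : Type*} [Group G] [Fintype G] {α : ℝ}

lemma hTk_measurable (hα : α ∈ Set.Ico (0:ℝ) 1) : Measurable (hTk α : (G → ℝ) → ℝ) := by
  apply measurable_of_Iic
  intro c
  have hset : (hTk α : (G → ℝ) → ℝ) ⁻¹' Set.Iic c =
      ⋃ (S : Finset G) (_ : Nat.ceil ((1 - α) * (Fintype.card G : ℝ)) ≤ S.card),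
        ⋂ g ∈ S, {y : G → ℝ | y g ≤ c} := by
    ext y
    simp only [Set.mem_preimage, Set.mem_Iic, Set.mem_iUnion, Set.mem_iInter, Set.mem_setOf_eq]
    have hiff := sortedVal_le_iff (s := Multiset.map y Finset.univ.val)
      (hk_one_le hα) (by rw [card_map_univ]; exact hk_le_card hα) c
    rw [countP_map_eq_card_filter] at hiff
    constructor
    · intro h
      refine ⟨Finset.univ.filter fun g => y g ≤ c, hiff.1 h, fun g hg => ?_⟩
      exact (Finset.mem_filter.1 hg).2
    · rintro ⟨S, hS, hall⟩
      apply hiff.2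
      refine le_trans hS (Finset.card_le_card ?_)
      intro g hg
      exact Finset.mem_filter.2 ⟨Finset.mem_univ g, hall g hg⟩
  rw [hset]
  apply MeasurableSet.iUnion
  intro S
  apply MeasurableSet.iUnion
  intro _
  apply MeasurableSet.biInter (Set.to_countable _)
  intro g _
  exact measurableSet_le (measurable_pi_apply g) measurable_const

lemma hMp_measurable_real (hα : α ∈ Set.Ico (0:ℝ) 1) :
    Measurable (fun y : G → ℝ => (hMp α y : ℝ)) := by
  have heq : (fun y : G → ℝ => (hMp α y : ℝ)) =
      fun y => ∑ g : G, if y g > hTk α y then (1:ℝ) else 0 := by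
    funext y
    rw [Finset.sum_boole]
    rfl
  rw [heq]
  apply Finset.measurable_sum
  intro g _
  exact Measurable.ite (measurableSet_lt (hTk_measurable hα) (measurable_pi_apply g))
    measurable_const measurable_const

lemma hMz_measurable_real (hα : α ∈ Set.Ico (0:ℝ) 1) :
    Measurable (fun y : G → ℝ => (hMz α y : ℝ)) := by
  have heq : (fun y : G → ℝ => (hMz α y : ℝ)) =
      fun y => ∑ g : G, if y g = hTk α y then (1:ℝ) else 0 := by
    funext y
    rw [Finset.sum_boole]
    rfl
  rw [heq]
  apply Finset.measurable_sum
  intro g _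
  exact Measurable.ite (measurableSet_eq_fun (measurable_pi_apply g) (hTk_measurable hα))
    measurable_const measurable_const

lemma ha_measurable (hα : α ∈ Set.Ico (0:ℝ) 1) : Measurable (ha α : (G → ℝ) → ℝ) :=
  Measurable.div (Measurable.sub measurable_const (hMp_measurable_real hα))
    (hMz_measurable_real hα)

lemma hF_measurable (hα : α ∈ Set.Ico (0:ℝ) 1) : Measurable (hF α : (G → ℝ) → ℝ≥0∞) := by
  apply Measurable.add
  · exact Measurable.ite (measurableSet_lt (hTk_measurable hα) (measurable_pi_apply 1))
      measurable_const measurable_const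
  · exact Measurable.ite (measurableSet_eq_fun (measurable_pi_apply 1) (hTk_measurable hα))
      (ENNReal.measurable_ofReal.comp (ha_measurable hα)) measurable_const

end meas

/-- Hoeffding's randomized permutation test is exact: rejecting when
`T(X) > T⁽ᵏ⁾(X)` and with probability `a(X) = (α·#G − M⁺(X))/M⁰(X)` when
`T(X) = T⁽ᵏ⁾(X)` gives rejection probability exactly `α` under the null. -/
theorem hoeffding_randomized_test_exact
    {Ω 𝒳 G : Type*} [MeasurableSpace Ω] [MeasurableSpace 𝒳]
    [Group G] [Fintype G] [MulAction G 𝒳]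
    (P : Measure Ω) [IsProbabilityMeasure P]
    (X : Ω → 𝒳) (hX : Measurable X)
    (hG : ∀ g : G, Measurable fun x : 𝒳 => g • x)
    (T : 𝒳 → ℝ) (hT : Measurable T)
    (hinv : ∀ g : G,
      Measure.map (fun ω => fun a : G => T (a • X ω)) P =
        Measure.map (fun ω => fun a : G => T (a • g • X ω)) P)
    (α : ℝ) (hα : α ∈ Set.Ico (0 : ℝ) 1)
    -- the auxiliary uniform randomization `u`, independent of `X`
    (u : Ω → ℝ) (hu : Measurable u)
    (hlaw : Measure.map (fun ω => (X ω, u ω)) P =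
      (Measure.map X P).prod (volume.restrict (Set.Icc (0 : ℝ) 1))) :
    -- notation
    (fun Tk : 𝒳 → ℝ =>
      (fun Mplus : 𝒳 → ℕ => (fun Mzero : 𝒳 → ℕ =>
        (fun a : 𝒳 → ℝ =>
          (P {ω | T (X ω) > Tk (X ω) ∨
              (T (X ω) = Tk (X ω) ∧ u ω < a (X ω))}).toReal = α)
        (fun x => (α * (Fintype.card G : ℝ) - (Mplus x : ℝ)) / (Mzero x : ℝ)))
        (fun x => (Finset.univ.filter fun g : G => T (g • x) = Tk x).card))
      (fun x => (Finset.univ.filter fun g : G => T (g • x) > Tk x).card))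
    (fun x => sortedVal (Multiset.map (fun g : G => T (g • x)) Finset.univ.val)
      (Nat.ceil ((1 - α) * (Fintype.card G : ℝ)))) := by
  set h : 𝒳 → G → ℝ := fun x g => T (g • x) with hhdef
  show (P {ω | T (X ω) > hTk α (h (X ω)) ∨
      (T (X ω) = hTk α (h (X ω)) ∧ u ω < ha α (h (X ω)))}).toReal = α
  have hh : Measurable h := measurable_pi_lambda _ fun g => hT.comp (hG g)
  -- the event as preimage of a measurable set in 𝒳 × ℝ
  set S : Set (𝒳 × ℝ) := {p | T p.1 > hTk α (h p.1) ∨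
      (T p.1 = hTk α (h p.1) ∧ p.2 < ha α (h p.1))} with hSdef
  have hS : MeasurableSet S := by
    apply MeasurableSet.union
    · exact measurableSet_lt ((hTk_measurable hα).comp (hh.comp measurable_fst))
        (hT.comp measurable_fst)
    · exact (measurableSet_eq_fun (hT.comp measurable_fst)
        ((hTk_measurable hα).comp (hh.comp measurable_fst))).inter
        (measurableSet_lt measurable_snd ((ha_measurable hα).comp (hh.comp measurable_fst)))
  have hpair : Measurable fun ω => (X ω, u ω) := hX.prodMk hu
  set μ : Measure 𝒳 := Measure.map X P with hμdef
  set ν : Measure ℝ := volume.restrict (Set.Icc (0 : ℝ) 1) with hνdef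
  have h1 : P {ω | T (X ω) > hTk α (h (X ω)) ∨
      (T (X ω) = hTk α (h (X ω)) ∧ u ω < ha α (h (X ω)))} = (μ.prod ν) S := by
    rw [← hlaw, Measure.map_apply hpair hS]
    rfl
  -- slice computation
  have h1x : ∀ x : 𝒳, h x 1 = T x := fun x => by
    show T ((1 : G) • x) = T x
    rw [one_smul]
  have hslice : ∀ x : 𝒳, ν (Prod.mk x ⁻¹' S) = hF α (h x) := by
    intro x
    by_cases hgt : T x > hTk α (h x)
    · have hset : Prod.mk x ⁻¹' S = Set.univ := by
        ext t
        simp [hSdef, hgt]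
      rw [hset, Measure.restrict_apply_univ, Real.volume_Icc]
      have : hF α (h x) = 1 := by
        rw [hF, h1x x, if_pos hgt, if_neg (ne_of_gt hgt), add_zero]
      rw [this]
      norm_num
    · by_cases heq : T x = hTk α (h x)
      · have hset : Prod.mk x ⁻¹' S = Set.Iio (ha α (h x)) := by
          ext t
          simp [hSdef, hgt, heq]
        rw [hset, hνdef, Measure.restrict_apply measurableSet_Iio]
        have h0 : 0 ≤ ha α (h x) := ha_nonneg hα (h x)
        have hle1 : ha α (h x) ≤ 1 := ha_le_one hα (h x)
        have hinter : Set.Iio (ha α (h x)) ∩ Set.Icc (0:ℝ) 1 = Set.Ico 0 (ha α (h x)) := by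
          ext t
          simp only [Set.mem_inter_iff, Set.mem_Iio, Set.mem_Icc, Set.mem_Ico]
          constructor
          · rintro ⟨h1', h2', _⟩
            exact ⟨h2', h1'⟩
          · rintro ⟨h1', h2'⟩
            exact ⟨h2', h1', le_trans (le_of_lt h2') hle1⟩
        rw [hinter, Real.volume_Ico, sub_zero]
        rw [hF, h1x x, if_neg hgt, if_pos heq, zero_add]
      · have hset : Prod.mk x ⁻¹' S = ∅ := by
          ext t
          simp [hSdef, hgt, heq]
        rw [hset, measure_empty]
        rw [hF, h1x x, if_neg hgt, if_neg heq, add_zero]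
  -- product formula
  have h2 : (μ.prod ν) S = ∫⁻ x, hF α (h x) ∂μ := by
    rw [Measure.prod_apply hS]
    exact lintegral_congr hslice
  have h3 : ∫⁻ x, hF α (h x) ∂μ = ∫⁻ ω, hF α (h (X ω)) ∂P := by
    rw [hμdef]
    exact lintegral_map ((hF_measurable hα).comp hh) hX
  -- group averaging
  set I : ℝ≥0∞ := ∫⁻ ω, hF α (h (X ω)) ∂P with hIdef
  have hYmeas : Measurable fun ω => h (X ω) := hh.comp hX
  have hshift : ∀ g : G, I = ∫⁻ ω, hF α (fun a => h (X ω) (a * g)) ∂P := by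
    intro g
    have hYg : Measurable fun ω => fun a : G => T (a • g • X ω) :=
      measurable_pi_lambda _ fun a => hT.comp ((hG a).comp ((hG g).comp hX))
    have e1 : I = ∫⁻ y, hF α y ∂(Measure.map (fun ω => fun a : G => T (a • X ω)) P) := by
      exact (lintegral_map (hF_measurable hα) hYmeas).symm
    rw [e1, hinv g, lintegral_map (hF_measurable hα) hYg]
    apply lintegral_congr
    intro ω
    congr 1
    funext a
    show T (a • g • X ω) = T ((a * g) • X ω)
    rw [mul_smul]
  have hNI : (Fintype.card G : ℝ≥0∞) * I = ENNReal.ofReal (α * (Fintype.card G : ℝ)) := by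
    have e2 : (Fintype.card G : ℝ≥0∞) * I = ∑ g : G, ∫⁻ ω, hF α (fun a => h (X ω) (a * g)) ∂P := by
      rw [Finset.sum_congr rfl fun g _ => (hshift g).symm, Finset.sum_const, Finset.card_univ,
        nsmul_eq_mul]
    rw [e2, ← lintegral_finset_sum]
    · rw [lintegral_congr fun ω => key_sum hα (h (X ω)), lintegral_const, measure_univ, mul_one]
    · intro g _
      exact (hF_measurable hα).comp
        (measurable_pi_lambda _ fun a => (measurable_pi_apply (a * g)).comp hYmeas)
  have hN0 : (Fintype.card G : ℝ≥0∞) ≠ 0 := by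
    simp [Fintype.card_ne_zero]
  have hNtop : (Fintype.card G : ℝ≥0∞) ≠ ⊤ := ENNReal.natCast_ne_top _
  have hI : I = ENNReal.ofReal α := by
    have : (Fintype.card G : ℝ≥0∞) * I = (Fintype.card G : ℝ≥0∞) * ENNReal.ofReal α := by
      rw [hNI, mul_comm α, ENNReal.ofReal_mul (by positivity), ENNReal.ofReal_natCast]
    exact (ENNReal.mul_right_inj hN0 hNtop).1 this
  rw [h1, h2, h3, hI, ENNReal.toReal_ofReal hα.1]
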